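/- Let A(V_S, V) denote the area of a geodesic sphere enclosing volume V in the round 3-sphere of total volume V_S. Then for fixed V > 0, A(V_S, V)^{3/2} < √(36π) · V, and A(V_S, V)^{3/2} = √(36π)·V·(1 − k(V/V_S)^{2/3} + O((V/V_S)^{4/3})) as V/V_S → 0, where k = (3/10)(3π/2)^{2/3}. -/

import Mathlib

open Real Set

private lemma aux_nonneg (g g' : ℝ → ℝ) (hd : ∀ x, HasDerivAt g (g' x) x)
    (h0 : g 0 = 0) (hp : ∀ x, 0 ≤ x → 0 ≤ g' x) {x : ℝ} (hx : 0 ≤ x) : 0 ≤ g x := by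
  have hmono : MonotoneOn g (Set.Ici (0:ℝ)) := by
    refine monotoneOn_of_deriv_nonneg (convex_Ici 0)
      (Differentiable.continuous fun y => (hd y).differentiableAt).continuousOn
      (fun y _ => ((hd y).differentiableAt).differentiableWithinAt) ?_
    intro y hy
    rw [interior_Ici] at hy
    rw [(hd y).deriv]
    exact hp y hy.le
  have := hmono Set.self_mem_Ici hx hx
  simpa [h0] using this

private lemma sin_ge3 {x : ℝ} (hx : 0 ≤ x) : x - x^3/6 ≤ Real.sin x := by
  have h := aux_nonneg (fun x => Real.sin x - x + x^3/6) (fun x => Real.cos x - 1 + x^2/2)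
    (fun x => by
      have := ((Real.hasDerivAt_sin x).sub (hasDerivAt_id' x)).add
        ((hasDerivAt_pow 3 x).div_const 6)
      refine HasDerivAt.congr_deriv this ?_
      push_cast; ring)
    (by norm_num) (fun x _ => by nlinarith [Real.one_sub_sq_div_two_le_cos (x := x)]) hx
  linarith [h]

private lemma cos_le4 {x : ℝ} (hx : 0 ≤ x) : Real.cos x ≤ 1 - x^2/2 + x^4/24 := by
  have h := aux_nonneg (fun x => 1 - x^2/2 + x^4/24 - Real.cos x)
    (fun x => Real.sin x - x + x^3/6)
    (fun x => by
      have := (((hasDerivAt_const x (1:ℝ)).sub ((hasDerivAt_pow 2 x).div_const 2)).add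
        ((hasDerivAt_pow 4 x).div_const 24)).sub (Real.hasDerivAt_cos x)
      refine HasDerivAt.congr_deriv this ?_
      push_cast; ring)
    (by norm_num) (fun x hx => by nlinarith [sin_ge3 hx]) hx
  linarith [h]

private lemma sin_le5 {x : ℝ} (hx : 0 ≤ x) : Real.sin x ≤ x - x^3/6 + x^5/120 := by
  have h := aux_nonneg (fun x => x - x^3/6 + x^5/120 - Real.sin x)
    (fun x => 1 - x^2/2 + x^4/24 - Real.cos x)
    (fun x => by
      have := (((hasDerivAt_id' x).sub ((hasDerivAt_pow 3 x).div_const 6)).add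
        ((hasDerivAt_pow 5 x).div_const 120)).sub (Real.hasDerivAt_sin x)
      refine HasDerivAt.congr_deriv this ?_
      push_cast; ring)
    (by norm_num) (fun x hx => by nlinarith [cos_le4 hx]) hx
  linarith [h]

private lemma cos_ge6 {x : ℝ} (hx : 0 ≤ x) : 1 - x^2/2 + x^4/24 - x^6/720 ≤ Real.cos x := by
  have h := aux_nonneg (fun x => Real.cos x - 1 + x^2/2 - x^4/24 + x^6/720)
    (fun x => x - x^3/6 + x^5/120 - Real.sin x)
    (fun x => by
      have := ((((Real.hasDerivAt_cos x).sub (hasDerivAt_const x (1:ℝ))).add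
        ((hasDerivAt_pow 2 x).div_const 2)).sub ((hasDerivAt_pow 4 x).div_const 24)).add
        ((hasDerivAt_pow 6 x).div_const 720)
      refine HasDerivAt.congr_deriv this ?_
      push_cast; ring)
    (by norm_num) (fun x hx => by nlinarith [sin_le5 hx]) hx
  linarith [h]

private lemma sin_ge7 {x : ℝ} (hx : 0 ≤ x) : x - x^3/6 + x^5/120 - x^7/5040 ≤ Real.sin x := by
  have h := aux_nonneg (fun x => Real.sin x - x + x^3/6 - x^5/120 + x^7/5040)
    (fun x => Real.cos x - 1 + x^2/2 - x^4/24 + x^6/720)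
    (fun x => by
      have := ((((Real.hasDerivAt_sin x).sub (hasDerivAt_id' x)).add
        ((hasDerivAt_pow 3 x).div_const 6)).sub ((hasDerivAt_pow 5 x).div_const 120)).add
        ((hasDerivAt_pow 7 x).div_const 5040)
      refine HasDerivAt.congr_deriv this ?_
      push_cast; ring)
    (by norm_num) (fun x hx => by nlinarith [cos_ge6 hx]) hx
  linarith [h]

-- bounds for f θ = θ - sin θ cos θ
private lemma f_lb {θ : ℝ} (hθ : 0 ≤ θ) :
    2/3*θ^3 - 2/15*θ^5 ≤ θ - Real.sin θ * Real.cos θ := by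
  have h2 : Real.sin (2*θ) = 2 * Real.sin θ * Real.cos θ := Real.sin_two_mul θ
  have h := sin_le5 (x := 2*θ) (by linarith)
  nlinarith [h]

private lemma f_ub {θ : ℝ} (hθ : 0 ≤ θ) :
    θ - Real.sin θ * Real.cos θ ≤ 2/3*θ^3 - 2/15*θ^5 + 4/315*θ^7 := by
  have h2 : Real.sin (2*θ) = 2 * Real.sin θ * Real.cos θ := Real.sin_two_mul θ
  have h := sin_ge7 (x := 2*θ) (by linarith)
  nlinarith [h]

-- |sin³θ - θ³ + θ⁵/2| ≤ θ⁷ on [0,1]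
private lemma sin_cube {θ : ℝ} (h0 : 0 ≤ θ) (h1 : θ ≤ 1) :
    |Real.sin θ ^ 3 - θ^3 + θ^5/2| ≤ θ^7 := by
  have hl := sin_ge3 h0
  have hu := sin_le5 h0
  have hcube : θ^3 ≤ θ := by
    nlinarith [mul_nonneg (mul_nonneg h0 (sub_nonneg.2 h1)) (by linarith : (0:ℝ) ≤ 1+θ)]
  have hs : 0 ≤ Real.sin θ := by nlinarith
  have h97 : θ^9 ≤ θ^7 := pow_le_pow_of_le_one h0 h1 (by norm_num)
  have h117 : θ^11 ≤ θ^7 := pow_le_pow_of_le_one h0 h1 (by norm_num)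
  have h137 : θ^13 ≤ θ^7 := pow_le_pow_of_le_one h0 h1 (by norm_num)
  have h157 : θ^15 ≤ θ^7 := pow_le_pow_of_le_one h0 h1 (by norm_num)
  have hun : (0:ℝ) ≤ θ - θ^3/6 := by linarith
  rw [abs_le]
  constructor
  · have := pow_le_pow_left₀ hun hl 3
    nlinarith [this, h97, pow_nonneg h0 7, pow_nonneg h0 9]
  · have := pow_le_pow_left₀ hs hu 3
    nlinarith [this, h97, h117, h137, h157, pow_nonneg h0 9, pow_nonneg h0 13]

private lemma f_mono : StrictMonoOn (fun θ : ℝ => θ - Real.sin θ * Real.cos θ) (Set.Icc 0 π) := by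
  have hd : ∀ x : ℝ, HasDerivAt (fun θ : ℝ => θ - Real.sin θ * Real.cos θ)
      (1 - (Real.cos x * Real.cos x + Real.sin x * -Real.sin x)) x :=
    fun x => (hasDerivAt_id' x).sub ((Real.hasDerivAt_sin x).mul (Real.hasDerivAt_cos x))
  refine strictMonoOn_of_deriv_pos (convex_Icc 0 π)
    (Continuous.continuousOn (by continuity)) ?_
  intro x hx
  rw [interior_Icc] at hx
  rw [(hd x).deriv]
  have hs : 0 < Real.sin x := Real.sin_pos_of_pos_of_lt_pi hx.1 hx.2
  nlinarith [Real.sin_sq_add_cos_sq x, mul_pos hs hs]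

private lemma f_pos {θ : ℝ} (hθ : θ ∈ Set.Ioc 0 π) : 0 < θ - Real.sin θ * Real.cos θ := by
  have := f_mono (Set.left_mem_Icc.2 Real.pi_pos.le) ⟨hθ.1.le, hθ.2⟩ hθ.1
  simpa using this

private lemma part1_core {θ : ℝ} (hθ : θ ∈ Set.Ioc 0 π) :
    2 * Real.sin θ ^ 3 < 3 * (θ - Real.sin θ * Real.cos θ) := by
  have hd : ∀ x : ℝ, HasDerivAt (fun θ : ℝ => 3*θ - 3*(Real.sin θ * Real.cos θ) - 2*Real.sin θ^3)
      (3*1 - 3*(Real.cos x * Real.cos x + Real.sin x * -Real.sin x)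
        - 2*(3*Real.sin x^2*Real.cos x)) x := by
    intro x
    have h1 := ((Real.hasDerivAt_sin x).mul (Real.hasDerivAt_cos x)).const_mul (3:ℝ)
    have h2 := ((Real.hasDerivAt_sin x).pow 3).const_mul (2:ℝ)
    have h3 := ((hasDerivAt_id' x).const_mul (3:ℝ)).sub h1
    have := h3.sub h2
    refine HasDerivAt.congr_deriv this ?_
    push_cast; ring
  have hmono : StrictMonoOn (fun θ : ℝ => 3*θ - 3*(Real.sin θ * Real.cos θ) - 2*Real.sin θ^3)
      (Set.Icc 0 π) := by
    refine strictMonoOn_of_deriv_pos (convex_Icc 0 π)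
      (Continuous.continuousOn (by continuity)) ?_
    intro x hx
    rw [interior_Icc] at hx
    rw [(hd x).deriv]
    have hs : 0 < Real.sin x := Real.sin_pos_of_pos_of_lt_pi hx.1 hx.2
    have hc1 : Real.cos x < 1 := by
      nlinarith [Real.sin_sq_add_cos_sq x, hs]
    nlinarith [Real.sin_sq_add_cos_sq x, mul_pos (mul_pos hs hs) (sub_pos.2 hc1)]
  have := hmono (Set.left_mem_Icc.2 Real.pi_pos.le) ⟨hθ.1.le, hθ.2⟩ hθ.1
  simp only [Real.sin_zero, Real.cos_zero] at this
  nlinarith [this]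

private lemma rpow_pow3 {θ : ℝ} (h : 0 ≤ θ) (n : ℕ) (p : ℝ) (hp : 3*p = n) :
    (θ^3) ^ p = θ^n := by
  have h3p : ((3:ℕ):ℝ) * p = (n:ℝ) := by push_cast; linarith
  rw [← Real.rpow_natCast θ 3, ← Real.rpow_mul h, h3p, Real.rpow_natCast]

set_option maxHeartbeats 1000000 in
private lemma key {θ : ℝ} (h0 : 0 < θ) (h1 : θ ≤ 1/2) :
    |Real.sin θ^3 - 3/2*(θ - Real.sin θ*Real.cos θ) +
      3/10*(3/2*(θ - Real.sin θ*Real.cos θ))^((5:ℝ)/3)|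
      ≤ 8*(3/2*(θ - Real.sin θ*Real.cos θ))^((7:ℝ)/3) := by
  set w : ℝ := 3/2*(θ - Real.sin θ*Real.cos θ) with hwdef
  have hFl := f_lb h0.le
  have hFu := f_ub h0.le
  have h2 : θ^2 ≤ 1/4 := by nlinarith
  have h75 : θ^7 ≤ θ^5/4 := by nlinarith [pow_nonneg h0.le 5]
  have hwl : θ^3 - θ^5/5 ≤ w := by rw [hwdef]; nlinarith
  have hwu : w ≤ θ^3 := by rw [hwdef]; nlinarith [pow_nonneg h0.le 5]
  have hwu7 : w ≤ θ^3 - θ^5/5 + 2/105*θ^7 := by rw [hwdef]; nlinarith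
  have hb : (0:ℝ) < 1 - θ^2/5 := by nlinarith
  have hwl' : (1 - θ^2/5)*θ^3 ≤ w := by nlinarith
  have hwpos : 0 < w := lt_of_lt_of_le (by nlinarith [pow_pos h0 3]) hwl
  -- w^{5/3} bounds
  have e3u : w^((5:ℝ)/3) ≤ θ^5 := by
    calc w^((5:ℝ)/3) ≤ (θ^3)^((5:ℝ)/3) :=
          Real.rpow_le_rpow hwpos.le hwu (by norm_num)
      _ = θ^5 := rpow_pow3 h0.le 5 _ (by norm_num)
  have e3l : θ^5 - 2/5*θ^7 ≤ w^((5:ℝ)/3) := by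
    have step1 : ((1 - θ^2/5)*θ^3)^((5:ℝ)/3) ≤ w^((5:ℝ)/3) :=
      Real.rpow_le_rpow (by positivity) hwl' (by norm_num)
    have step2 : ((1 - θ^2/5)*θ^3)^((5:ℝ)/3)
        = (1 - θ^2/5)^((5:ℝ)/3) * θ^5 := by
      rw [Real.mul_rpow hb.le (by positivity), rpow_pow3 h0.le 5 _ (by norm_num)]
    have step3 : (1 - θ^2/5)^((2:ℝ)) ≤ (1 - θ^2/5)^((5:ℝ)/3) :=
      Real.rpow_le_rpow_of_exponent_ge hb (by nlinarith) (by norm_num)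
    have step4 : (1 - θ^2/5)^((2:ℝ)) = (1-θ^2/5)^(2:ℕ) := by
      rw [← Real.rpow_natCast]; norm_num
    have hA : (1 - θ^2/5)^((5:ℝ)/3) * θ^5 ≤ w^((5:ℝ)/3) := by rw [← step2]; exact step1
    have hB : (1-θ^2/5)^(2:ℕ) ≤ (1 - θ^2/5)^((5:ℝ)/3) := by rw [← step4]; exact step3
    have hC : (1-θ^2/5)^(2:ℕ) * θ^5 ≤ (1 - θ^2/5)^((5:ℝ)/3) * θ^5 :=
      mul_le_mul_of_nonneg_right hB (pow_nonneg h0.le 5)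
    nlinarith [hA, hC, pow_nonneg h0.le 9]
  -- w^{7/3} lower bound
  have e4 : 1/2*θ^7 ≤ w^((7:ℝ)/3) := by
    have hwl'' : (19/20)*θ^3 ≤ w := by nlinarith [pow_nonneg h0.le 3]
    have step1 : ((19/20)*θ^3)^((7:ℝ)/3) ≤ w^((7:ℝ)/3) :=
      Real.rpow_le_rpow (by positivity) hwl'' (by norm_num)
    have step2 : ((19/20)*θ^3)^((7:ℝ)/3)
        = (19/20:ℝ)^((7:ℝ)/3) * θ^7 := by
      rw [Real.mul_rpow (by norm_num) (by positivity), rpow_pow3 h0.le 7 _ (by norm_num)]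
    have step3 : ((19:ℝ)/20)^((3:ℝ)) ≤ (19/20:ℝ)^((7:ℝ)/3) :=
      Real.rpow_le_rpow_of_exponent_ge (by norm_num) (by norm_num) (by norm_num)
    have step4 : ((19:ℝ)/20)^((3:ℝ)) = ((19:ℝ)/20)^(3:ℕ) := by
      rw [← Real.rpow_natCast]; norm_num
    have hB : ((19:ℝ)/20)^(3:ℕ) ≤ (19/20:ℝ)^((7:ℝ)/3) := by rw [← step4]; exact step3
    have hC : ((19:ℝ)/20)^(3:ℕ) * θ^7 ≤ (19/20:ℝ)^((7:ℝ)/3) * θ^7 :=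
      mul_le_mul_of_nonneg_right hB (pow_nonneg h0.le 7)
    nlinarith [step1, step2, hC]
  have e1 := sin_cube h0.le (by linarith)
  rw [abs_le] at e1 ⊢
  constructor <;>
    nlinarith [e1.1, e1.2, e3l, e3u, e4, hwl, hwu7, pow_nonneg h0.le 7]

private lemma sqrt36 : Real.sqrt (36*π) = 6*Real.sqrt π := by
  rw [show (36:ℝ)*π = 6^2*π by norm_num, Real.sqrt_mul (by positivity) π,
    Real.sqrt_sq (by norm_num : (0:ℝ) ≤ 6)]

private lemma area_eq {ρ s : ℝ} (hρ : 0 < ρ) (hs : 0 ≤ s) :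
    (4*π*ρ^2*s^2)^((3:ℝ)/2) = 8*(Real.sqrt π)^3*ρ^3*s^3 := by
  have hsq : Real.sqrt π ^ 2 = π := Real.sq_sqrt Real.pi_nonneg
  have h : 4*π*ρ^2*s^2 = (2*Real.sqrt π*ρ*s)^2 := by
    linear_combination (-(4*ρ^2*s^2)) * hsq
  rw [h]
  have hy : (0:ℝ) ≤ 2*Real.sqrt π*ρ*s := by positivity
  have h3p : ((2:ℕ):ℝ) * ((3:ℝ)/2) = ((3:ℕ):ℝ) := by push_cast; norm_num
  rw [← Real.rpow_natCast (2*Real.sqrt π*ρ*s) 2, ← Real.rpow_mul hy, h3p,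
    Real.rpow_natCast]
  ring

theorem round_sphere_isoperimetric_profile :
    (∀ ρ θ : ℝ, 0 < ρ → θ ∈ Set.Ioc 0 π →
      (4 * π * ρ ^ 2 * Real.sin θ ^ 2) ^ ((3:ℝ)/2) <
        Real.sqrt (36 * π) * (2 * π * ρ ^ 3 * (θ - Real.sin θ * Real.cos θ))) ∧
    (∃ C > (0:ℝ), ∃ δ > (0:ℝ), ∀ ρ θ : ℝ, 0 < ρ → θ ∈ Set.Ioc 0 π →
      (2 * π * ρ ^ 3 * (θ - Real.sin θ * Real.cos θ)) / (2 * π ^ 2 * ρ ^ 3) ≤ δ →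
      |(4 * π * ρ ^ 2 * Real.sin θ ^ 2) ^ ((3:ℝ)/2) -
        Real.sqrt (36 * π) * (2 * π * ρ ^ 3 * (θ - Real.sin θ * Real.cos θ)) *
          (1 - (3/10) * (3 * π / 2) ^ ((2:ℝ)/3) *
            ((2 * π * ρ ^ 3 * (θ - Real.sin θ * Real.cos θ)) /
              (2 * π ^ 2 * ρ ^ 3)) ^ ((2:ℝ)/3))| ≤
      C * Real.sqrt (36 * π) * (2 * π * ρ ^ 3 * (θ - Real.sin θ * Real.cos θ)) *
        ((2 * π * ρ ^ 3 * (θ - Real.sin θ * Real.cos θ)) /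
          (2 * π ^ 2 * ρ ^ 3)) ^ ((4:ℝ)/3)) := by
  have hsq : Real.sqrt π ^ 2 = π := Real.sq_sqrt Real.pi_nonneg
  constructor
  · intro ρ θ hρ hθ
    have hs : 0 ≤ Real.sin θ := Real.sin_nonneg_of_nonneg_of_le_pi hθ.1.le hθ.2
    rw [area_eq hρ hs, sqrt36]
    have hcore := part1_core hθ
    have hcube : Real.sqrt π ^ 3 = π * Real.sqrt π := by
      rw [pow_succ, hsq]
    rw [hcube]
    have hfac : (0:ℝ) < π * Real.sqrt π * ρ ^ 3 := by positivity
    nlinarith [mul_lt_mul_of_pos_left hcore hfac]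
  · refine ⟨8*(3*π/2)^((4:ℝ)/3), by positivity,
      ((1:ℝ)/2 - Real.sin (1/2) * Real.cos (1/2))/π, ?_, ?_⟩
    · have := f_pos (θ := 1/2) ⟨by norm_num, by nlinarith [Real.pi_gt_three]⟩
      positivity
    intro ρ θ hρ hθ hu
    have hs : 0 ≤ Real.sin θ := Real.sin_nonneg_of_nonneg_of_le_pi hθ.1.le hθ.2
    have hF : 0 < θ - Real.sin θ * Real.cos θ := f_pos hθ
    have hR : (2*π*ρ^3*(θ - Real.sin θ*Real.cos θ))/(2*π^2*ρ^3)
        = (θ - Real.sin θ*Real.cos θ)/π := by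
      rw [div_eq_div_iff (by positivity) Real.pi_pos.ne']
      ring
    rw [hR] at hu ⊢
    -- θ ≤ 1/2
    have hθhalf : θ ≤ 1/2 := by
      by_contra hcon
      push_neg at hcon
      have hmono := f_mono (a := 1/2) (b := θ)
        ⟨by norm_num, by nlinarith [Real.pi_gt_three]⟩ ⟨hθ.1.le, hθ.2⟩ hcon
      simp only at hmono
      have hlt : (1/2 - Real.sin (1/2) * Real.cos (1/2))/π
          < (θ - Real.sin θ*Real.cos θ)/π := by gcongr
      linarith [hu, hlt]
    set F : ℝ := θ - Real.sin θ*Real.cos θ with hFdef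
    set w : ℝ := 3/2*F with hwdef
    have hwpos : 0 < w := by rw [hwdef]; linarith
    have hsplit5 : w^((5:ℝ)/3) = w * w^((2:ℝ)/3) := by
      rw [show (5:ℝ)/3 = 1 + 2/3 by norm_num, Real.rpow_add hwpos, Real.rpow_one]
    have hsplit7 : w^((7:ℝ)/3) = w * w^((4:ℝ)/3) := by
      rw [show (7:ℝ)/3 = 1 + 4/3 by norm_num, Real.rpow_add hwpos, Real.rpow_one]
    have h23 : (3*π/2)^((2:ℝ)/3) * (F/π)^((2:ℝ)/3) = w^((2:ℝ)/3) := by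
      rw [← Real.mul_rpow (by positivity) (by positivity)]
      congr 1
      field_simp
      ring
    have h43 : (3*π/2)^((4:ℝ)/3) * (F/π)^((4:ℝ)/3) = w^((4:ℝ)/3) := by
      rw [← Real.mul_rpow (by positivity) (by positivity)]
      congr 1
      field_simp
      ring
    have hkey := key hθ.1 hθhalf
    rw [← hFdef, ← hwdef, hsplit5, hsplit7] at hkey
    have hfac : (0:ℝ) < 8*Real.sqrt π^3*ρ^3 := by positivity
    have hterm : Real.sqrt (36*π) * (2*π*ρ^3*F) *
        (1 - 3/10*(3*π/2)^((2:ℝ)/3)*(F/π)^((2:ℝ)/3))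
        = 8*Real.sqrt π^3*ρ^3*(w - 3/10*(w*w^((2:ℝ)/3))) := by
      rw [sqrt36]
      linear_combination (-(12*ρ^3*F*Real.sqrt π) + 18/5*ρ^3*F*Real.sqrt π*w^((2:ℝ)/3))*hsq
        + (-(18/5)*π*ρ^3*F*Real.sqrt π)*h23 + (8*Real.sqrt π^3*ρ^3
          - 12/5*Real.sqrt π^3*ρ^3*w^((2:ℝ)/3))*hwdef
    have hrhs : 8*(3*π/2)^((4:ℝ)/3) * Real.sqrt (36*π) * (2*π*ρ^3*F) * (F/π)^((4:ℝ)/3)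
        = 8*Real.sqrt π^3*ρ^3*(8*(w*w^((4:ℝ)/3))) := by
      rw [sqrt36]
      linear_combination (96*π*ρ^3*F*Real.sqrt π)*h43
        + (-(96*ρ^3*F*Real.sqrt π*w^((4:ℝ)/3)))*hsq
        + (64*Real.sqrt π^3*ρ^3*w^((4:ℝ)/3))*hwdef
    have harg : (4*π*ρ^2*Real.sin θ^2)^((3:ℝ)/2) -
          Real.sqrt (36*π) * (2*π*ρ^3*F) *
            (1 - 3/10*(3*π/2)^((2:ℝ)/3)*(F/π)^((2:ℝ)/3))
        = (8*Real.sqrt π^3*ρ^3) *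
            (Real.sin θ^3 - w + 3/10*(w*w^((2:ℝ)/3))) := by
      rw [area_eq hρ hs, hterm]; ring
    calc |(4*π*ρ^2*Real.sin θ^2)^((3:ℝ)/2) -
          Real.sqrt (36*π) * (2*π*ρ^3*F) *
            (1 - 3/10*(3*π/2)^((2:ℝ)/3)*(F/π)^((2:ℝ)/3))|
        = (8*Real.sqrt π^3*ρ^3) *
            |Real.sin θ^3 - w + 3/10*(w*w^((2:ℝ)/3))| := by
          rw [harg, abs_mul, abs_of_pos hfac]
      _ ≤ (8*Real.sqrt π^3*ρ^3) * (8*(w*w^((4:ℝ)/3))) :=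
          mul_le_mul_of_nonneg_left hkey hfac.le
      _ = 8*(3*π/2)^((4:ℝ)/3) * Real.sqrt (36*π) * (2*π*ρ^3*F) * (F/π)^((4:ℝ)/3) :=
          hrhs.symm
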